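/- Let F be a field and let C be a smooth conic in the projective plane P^2 over F, with char F ≠ 2. Let q1, q2, q3 be three distinct points of C. Then the three tangent lines to C at q1, q2, q3 have no common point. -/

import Mathlib

open Matrix

/-- Three distinct points of a smooth conic in `P^2` (the zero set of a
nondegenerate quadratic form in three variables, char `F ≠ 2`) have tangent lines
with no common point. The conic is given by an invertible symmetric matrix `M`,
a point `q` of `P^2` lies on the conic when `q ⬝ᵥ M q = 0`, and the tangent line at
such a `q` is `{x : q ⬝ᵥ M x = 0}` (the polar line). -/
theorem stmt12 {F : Type*} [Field F] (h2 : (2 : F) ≠ 0)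
    (M : Matrix (Fin 3) (Fin 3) F) (hsymm : M.IsSymm) (hM : IsUnit M.det)
    (q1 q2 q3 : Fin 3 → F)
    (hn1 : q1 ≠ 0) (hn2 : q2 ≠ 0) (hn3 : q3 ≠ 0)
    (hq1 : q1 ⬝ᵥ M.mulVec q1 = 0) (hq2 : q2 ⬝ᵥ M.mulVec q2 = 0)
    (hq3 : q3 ⬝ᵥ M.mulVec q3 = 0)
    (hd12 : ∀ c : F, q2 ≠ c • q1) (hd13 : ∀ c : F, q3 ≠ c • q1)
    (hd23 : ∀ c : F, q3 ≠ c • q2) :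
    ∀ x : Fin 3 → F,
      q1 ⬝ᵥ M.mulVec x = 0 → q2 ⬝ᵥ M.mulVec x = 0 → q3 ⬝ᵥ M.mulVec x = 0 →
      x = 0 := by
  -- symmetry of the bilinear pairing
  have hsym : ∀ u v : Fin 3 → F, u ⬝ᵥ M.mulVec v = v ⬝ᵥ M.mulVec u := by
    intro u v
    rw [Matrix.dotProduct_mulVec]
    conv_lhs => rw [← hsymm]
    rw [Matrix.vecMul_transpose, dotProduct_comm]
  -- a small helper for dividing scalar multiples
  have hdiv : ∀ (t : F) (v w : Fin 3 → F), t ≠ 0 → t • v = w → v = t⁻¹ • w := by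
    intro t v w ht h
    rw [← h, smul_smul, inv_mul_cancel₀ ht, one_smul]
  -- q1, q2 are linearly independent
  have hli2 : LinearIndependent F ![q1, q2] := by
    rw [LinearIndependent.pair_iff]
    intro s t hst
    rcases eq_or_ne t 0 with ht | ht
    · subst ht
      rw [zero_smul, add_zero] at hst
      rcases eq_or_ne s 0 with hs | hs
      · exact ⟨hs, rfl⟩
      · exact absurd ((smul_eq_zero.mp hst).resolve_left hs) hn1
    · exfalso
      apply hd12 (t⁻¹ * (-s))
      have h' : t • q2 = (-s) • q1 := by
        rw [neg_smul]; exact eq_neg_of_add_eq_zero_left (by rw [add_comm]; exact hst)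
      rw [hdiv t q2 ((-s) • q1) ht h', smul_smul]
  -- expansion of the form on combinations of q1, q2
  have hexp : ∀ s t s' t' : F, (s • q1 + t • q2) ⬝ᵥ M.mulVec (s' • q1 + t' • q2)
      = s * s' * (q1 ⬝ᵥ M.mulVec q1) + s * t' * (q1 ⬝ᵥ M.mulVec q2)
        + t * s' * (q2 ⬝ᵥ M.mulVec q1) + t * t' * (q2 ⬝ᵥ M.mulVec q2) := by
    intro s t s' t'
    simp only [Matrix.mulVec_add, Matrix.mulVec_smul, add_dotProduct,
      smul_dotProduct, dotProduct_add, dotProduct_smul, smul_eq_mul]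
    ring
  -- q1, q2, q3 are linearly independent
  have hli3 : LinearIndependent F ![q1, q2, q3] := by
    by_contra hcon
    rw [Fintype.not_linearIndependent_iff] at hcon
    obtain ⟨g, hg, i, hi⟩ := hcon
    rw [Fin.sum_univ_three] at hg
    simp only [Matrix.cons_val_zero, Matrix.cons_val_one, Matrix.head_cons,
      Matrix.cons_val_two, Matrix.tail_cons] at hg
    -- g 2 ≠ 0
    have hg2 : g 2 ≠ 0 := by
      intro hg2
      rw [hg2, zero_smul, add_zero] at hg
      obtain ⟨h0, h1⟩ := LinearIndependent.pair_iff.mp hli2 (g 0) (g 1) hg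
      fin_cases i <;> simp_all
    -- q3 is a combination of q1 and q2
    have hq3e : q3 = (-(g 2)⁻¹ * g 0) • q1 + (-(g 2)⁻¹ * g 1) • q2 := by
      have h' : (g 2) • q3 = (-(g 0)) • q1 + (-(g 1)) • q2 := by
        rw [neg_smul, neg_smul, ← neg_add]
        exact eq_neg_of_add_eq_zero_left (by rw [add_comm]; exact hg)
      rw [hdiv (g 2) q3 _ hg2 h', smul_add, smul_smul, smul_smul]
      ring_nf
    set a : F := -(g 2)⁻¹ * g 0 with ha'
    set b : F := -(g 2)⁻¹ * g 1 with hb'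
    have ha : a ≠ 0 := by
      intro h
      rw [h, zero_smul, zero_add] at hq3e
      exact hd23 b hq3e
    have hb : b ≠ 0 := by
      intro h
      rw [h, zero_smul, add_zero] at hq3e
      exact hd13 a hq3e
    -- q1 is orthogonal to q2
    have hB12 : q1 ⬝ᵥ M.mulVec q2 = 0 := by
      have h0 : 2 * (a * b * (q1 ⬝ᵥ M.mulVec q2)) = 0 := by
        have := hq3
        rw [hq3e, hexp, hq1, hq2, hsym q2 q1] at this
        linear_combination this
      rcases mul_eq_zero.mp h0 with h | h
      · exact absurd h h2
      rcases mul_eq_zero.mp h with h | h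
      · rcases mul_eq_zero.mp h with h | h
        · exact absurd h ha
        · exact absurd h hb
      · exact h
    -- span{q1, q2} is a 2-dimensional totally isotropic subspace: contradiction
    set B := Matrix.toBilin' M with hB
    have hBnd : B.Nondegenerate :=
      (Matrix.nondegenerate_of_det_ne_zero hM.ne_zero).toBilin'
    have hrefl : B.IsRefl := by
      intro u v h
      rw [hB, Matrix.toBilin'_apply'] at h ⊢
      rw [hsym]; exact h
    set W := Submodule.span F {q1, q2} with hW
    have hWle : W ≤ B.orthogonal W := by
      intro v hv
      rw [LinearMap.BilinForm.mem_orthogonal_iff]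
      intro n hn
      rw [hW, Submodule.mem_span_pair] at hv hn
      obtain ⟨s, t, rfl⟩ := hv
      obtain ⟨s', t', rfl⟩ := hn
      show B _ _ = 0
      rw [hB, Matrix.toBilin'_apply', hexp, hq1, hq2, hsym q2 q1, hB12]
      ring
    have hW2 : Module.finrank F W = 2 := by
      have hr : Set.range ![q1, q2] = ({q1, q2} : Set (Fin 3 → F)) := by
        ext v
        simp [Matrix.range_cons, Matrix.range_empty, or_comm]
      rw [hW, ← hr, finrank_span_eq_card hli2]
      simp
    have hO : Module.finrank F (B.orthogonal W) = 1 := by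
      rw [LinearMap.BilinForm.finrank_orthogonal hBnd W, hW2]
      simp
    have := Submodule.finrank_mono hWle
    omega
  -- conclude: the rows q1, q2, q3 form an invertible matrix
  intro x hx1 hx2 hx3
  set Q : Matrix (Fin 3) (Fin 3) F := Matrix.of ![q1, q2, q3] with hQdef
  have hQ : IsUnit Q := Matrix.linearIndependent_rows_iff_isUnit.mp hli3
  have hy : Q *ᵥ (M *ᵥ x) = 0 := by
    funext i
    fin_cases i
    · exact hx1
    · exact hx2
    · exact hx3
  have hy0 : M *ᵥ x = 0 := by
    apply Matrix.mulVec_injective_iff_isUnit.mpr hQ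
    rw [hy, Matrix.mulVec_zero]
  apply Matrix.mulVec_injective_iff_isUnit.mpr ((Matrix.isUnit_iff_isUnit_det M).mpr hM)
  rw [hy0, Matrix.mulVec_zero]
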